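/- For every α ∈ [0,1] and all n×n symmetric positive semidefinite matrices X₁, X₂, one has g_{θ,W}(α X₁ + (1−α) X₂) ≥ α g_{θ,W}(X₁) + (1−α) g_{θ,W}(X₂), i.e. the modified Riccati operator g_{θ,W} is matrix-concave on the positive semidefinite cone. (Proposition 1, item 4.) -/

import Mathlib

open Matrix

private lemma psd_smul {k : ℕ} {c : ℝ} (hc : 0 ≤ c) {A : Matrix (Fin k) (Fin k) ℝ}
    (hA : A.PosSemidef) : (c • A).PosSemidef := by
  constructor
  · have h := hA.1
    unfold Matrix.IsHermitian at h ⊢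
    rw [conjTranspose_smul, h]
    simp
  · intro x
    exact (hA.smul hc).2 x

private lemma psd_mul_mul_t {k l : ℕ} {A : Matrix (Fin k) (Fin k) ℝ}
    (hA : A.PosSemidef) (B : Matrix (Fin l) (Fin k) ℝ) : (B * A * Bᵀ).PosSemidef := by
  have := hA.mul_mul_conjTranspose_same B
  rwa [conjTranspose_eq_transpose_of_trivial] at this


/-- The modified Riccati operator
`g_{θ,W}(X) = A X Aᵀ + Q − θ A X Cᵀ (C X Cᵀ + W)⁻¹ C X Aᵀ`. -/
noncomputable def gRic {n m : ℕ} (A Q : Matrix (Fin n) (Fin n) ℝ)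
    (C : Matrix (Fin m) (Fin n) ℝ) (W : Matrix (Fin m) (Fin m) ℝ) (θ : ℝ)
    (X : Matrix (Fin n) (Fin n) ℝ) : Matrix (Fin n) (Fin n) ℝ :=
  A * X * Aᵀ + Q - θ • (A * X * Cᵀ * (C * X * Cᵀ + W)⁻¹ * (C * X * Aᵀ))

private lemma gRic_eq {n m : ℕ} (A Q : Matrix (Fin n) (Fin n) ℝ)
    (C : Matrix (Fin m) (Fin n) ℝ) (W : Matrix (Fin m) (Fin m) ℝ) (θ : ℝ)
    (hW : W.PosDef) (X : Matrix (Fin n) (Fin n) ℝ) (hX : X.PosSemidef)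
    (K : Matrix (Fin n) (Fin m) ℝ) :
    gRic A Q C W θ X =
      (A * X * Aᵀ + Q + θ • (K * (C * X * Aᵀ) + (A * X * Cᵀ) * Kᵀ
        + K * (C * X * Cᵀ + W) * Kᵀ))
      - θ • ((K + A * X * Cᵀ * (C * X * Cᵀ + W)⁻¹) * (C * X * Cᵀ + W)
        * (K + A * X * Cᵀ * (C * X * Cᵀ + W)⁻¹)ᵀ) := by
  have hXt : Xᵀ = X := by
    have := hX.1.eq; rwa [conjTranspose_eq_transpose_of_trivial] at this
  set S := C * X * Cᵀ + W with hSdef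
  have hS : S.PosDef := Matrix.PosDef.posSemidef_add (psd_mul_mul_t hX C) hW
  have hSu : IsUnit S.det := isUnit_iff_isUnit_det _ |>.1 hS.isUnit
  have hSi : S * S⁻¹ = 1 := Matrix.mul_nonsing_inv _ hSu
  have hSi' : S⁻¹ * S = 1 := Matrix.nonsing_inv_mul _ hSu
  have hSt : Sᵀ = S := by
    have := hS.1.eq; rwa [conjTranspose_eq_transpose_of_trivial] at this
  have hSit : (S⁻¹)ᵀ = S⁻¹ := by rw [Matrix.transpose_nonsing_inv, hSt]
  set T := A * X * Cᵀ with hTdef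
  have hT : C * X * Aᵀ = Tᵀ := by
    rw [hTdef, transpose_mul, transpose_mul, transpose_transpose, hXt, Matrix.mul_assoc]
  have c1 : ∀ x : Matrix (Fin m) (Fin n) ℝ, S * (S⁻¹ * x) = x := fun x => by
    rw [← Matrix.mul_assoc, hSi, Matrix.one_mul]
  have c2 : ∀ x : Matrix (Fin m) (Fin n) ℝ, S⁻¹ * (S * x) = x := fun x => by
    rw [← Matrix.mul_assoc, hSi', Matrix.one_mul]
  have expand : (K + T * S⁻¹) * S * (K + T * S⁻¹)ᵀ
      = K * Tᵀ + T * Kᵀ + K * S * Kᵀ + T * S⁻¹ * Tᵀ := by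
    rw [transpose_add, transpose_mul, hSit]
    simp only [Matrix.mul_add, Matrix.add_mul, Matrix.mul_assoc, c1, c2]
    abel
  rw [gRic, hT, expand]
  simp only [smul_add]
  abel

/-- Proposition 1, item 4: matrix-concavity of the modified Riccati operator
on the positive semidefinite cone. -/
theorem gRic_concave {n m : ℕ} (A Q : Matrix (Fin n) (Fin n) ℝ)
    (C : Matrix (Fin m) (Fin n) ℝ) (W : Matrix (Fin m) (Fin m) ℝ) (θ : ℝ)
    (hQ : Q.PosSemidef) (hW : W.PosDef) (hθ : θ ∈ Set.Ioc (0 : ℝ) 1)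
    (α : ℝ) (hα : α ∈ Set.Icc (0 : ℝ) 1)
    (X₁ X₂ : Matrix (Fin n) (Fin n) ℝ)
    (hX₁ : X₁.PosSemidef) (hX₂ : X₂.PosSemidef) :
    (gRic A Q C W θ (α • X₁ + (1 - α) • X₂) -
      (α • gRic A Q C W θ X₁ + (1 - α) • gRic A Q C W θ X₂)).PosSemidef := by
  obtain ⟨hα0, hα1⟩ := hα
  have hβ0 : (0 : ℝ) ≤ 1 - α := by linarith
  set Y := α • X₁ + (1 - α) • X₂ with hYdef
  have hY : Y.PosSemidef := (psd_smul hα0 hX₁).add (psd_smul hβ0 hX₂)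
  set K : Matrix (Fin n) (Fin m) ℝ := -(A * Y * Cᵀ * (C * Y * Cᵀ + W)⁻¹) with hKdef
  set M₁ := K + A * X₁ * Cᵀ * (C * X₁ * Cᵀ + W)⁻¹ with hM₁
  set M₂ := K + A * X₂ * Cᵀ * (C * X₂ * Cᵀ + W)⁻¹ with hM₂
  have h0 : gRic A Q C W θ Y
      = A * Y * Aᵀ + Q + θ • (K * (C * Y * Aᵀ) + (A * Y * Cᵀ) * Kᵀ
        + K * (C * Y * Cᵀ + W) * Kᵀ) := by
    rw [gRic_eq A Q C W θ hW Y hY K]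
    rw [hKdef]
    simp
  have h1 := gRic_eq A Q C W θ hW X₁ hX₁ K
  have h2 := gRic_eq A Q C W θ hW X₂ hX₂ K
  have hlin : A * Y * Aᵀ + Q + θ • (K * (C * Y * Aᵀ) + (A * Y * Cᵀ) * Kᵀ
        + K * (C * Y * Cᵀ + W) * Kᵀ)
      = α • (A * X₁ * Aᵀ + Q + θ • (K * (C * X₁ * Aᵀ) + (A * X₁ * Cᵀ) * Kᵀ
          + K * (C * X₁ * Cᵀ + W) * Kᵀ))
        + (1 - α) • (A * X₂ * Aᵀ + Q + θ • (K * (C * X₂ * Aᵀ) + (A * X₂ * Cᵀ) * Kᵀ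
          + K * (C * X₂ * Cᵀ + W) * Kᵀ)) := by
    rw [hYdef]
    simp only [Matrix.mul_add, Matrix.add_mul, Matrix.mul_smul, Matrix.smul_mul,
      smul_add, smul_smul]
    module
  have key : gRic A Q C W θ Y - (α • gRic A Q C W θ X₁ + (1 - α) • gRic A Q C W θ X₂)
      = α • (θ • (M₁ * (C * X₁ * Cᵀ + W) * M₁ᵀ))
        + (1 - α) • (θ • (M₂ * (C * X₂ * Cᵀ + W) * M₂ᵀ)) := by
    rw [h0, h1, h2, hlin]
    simp only [smul_sub]
    abel
  rw [key]
  have hS₁ : (C * X₁ * Cᵀ + W).PosSemidef := (Matrix.PosDef.posSemidef_add (psd_mul_mul_t hX₁ C) hW).posSemidef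
  have hS₂ : (C * X₂ * Cᵀ + W).PosSemidef := (Matrix.PosDef.posSemidef_add (psd_mul_mul_t hX₂ C) hW).posSemidef
  exact (psd_smul hα0 (psd_smul hθ.1.le (psd_mul_mul_t hS₁ M₁))).add
    (psd_smul hβ0 (psd_smul hθ.1.le (psd_mul_mul_t hS₂ M₂)))
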